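/- Define K⁰_log = {(t, v, x) ∈ ℝ × ℝ_{>0} × ℝ^n_{>0} : −∑_{i=1}^n v log(x_i/v) ≤ t}. Then the closure of K⁰_log in ℝ^{n+2} equals K⁰_log ∪ (ℝ_{≥0} × {0} × ℝ^n_{≥0}). -/

import Mathlib

open Finset Filter Topology Real

private lemma stmt4_xlogx :
    Filter.Tendsto (fun u : ℝ => u * Real.log u) (nhdsWithin 0 (Set.Ioi 0)) (nhds 0) := by
  have h := tendsto_log_mul_rpow_nhdsGT_zero zero_lt_one
  simp only [Real.rpow_one] at h
  simpa [mul_comm] using h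

/-- Let
`K⁰_log = {(t, v, x) ∈ ℝ × ℝ_{>0} × ℝⁿ_{>0} : −∑ᵢ v·log(xᵢ/v) ≤ t}`.
Its closure in `ℝ^{n+2}` equals `K⁰_log ∪ (ℝ_{≥0} × {0} × ℝⁿ_{≥0})`. -/
theorem stmt4 (n : ℕ) :
    closure {p : ℝ × ℝ × (Fin n → ℝ) |
        0 < p.2.1 ∧ (∀ i, 0 < p.2.2 i) ∧
          -∑ i, p.2.1 * Real.log (p.2.2 i / p.2.1) ≤ p.1} =
    {p : ℝ × ℝ × (Fin n → ℝ) |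
        0 < p.2.1 ∧ (∀ i, 0 < p.2.2 i) ∧
          -∑ i, p.2.1 * Real.log (p.2.2 i / p.2.1) ≤ p.1} ∪
    {p : ℝ × ℝ × (Fin n → ℝ) | 0 ≤ p.1 ∧ p.2.1 = 0 ∧ ∀ i, 0 ≤ p.2.2 i} := by
  apply subset_antisymm
  · -- closure ⊆ union
    intro p hp
    obtain ⟨q, hq, hconv⟩ := mem_closure_iff_seq_limit.mp hp
    have ht : Tendsto (fun k => (q k).1) atTop (𝓝 p.1) :=
      (continuous_fst.tendsto p).comp hconv
    have hv : Tendsto (fun k => (q k).2.1) atTop (𝓝 p.2.1) :=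
      ((continuous_fst.comp continuous_snd).tendsto p).comp hconv
    have hx : ∀ i, Tendsto (fun k => (q k).2.2 i) atTop (𝓝 (p.2.2 i)) := fun i =>
      (((continuous_apply i).comp (continuous_snd.comp continuous_snd)).tendsto p).comp hconv
    have hvk : ∀ k, 0 < (q k).2.1 := fun k => (hq k).1
    have hxk : ∀ k i, 0 < (q k).2.2 i := fun k => (hq k).2.1
    have hfk : ∀ k, -∑ i, (q k).2.1 * Real.log ((q k).2.2 i / (q k).2.1) ≤ (q k).1 :=
      fun k => (hq k).2.2
    have hv0 : 0 ≤ p.2.1 := ge_of_tendsto' hv fun k => (hvk k).le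
    have hx0 : ∀ i, 0 ≤ p.2.2 i := fun i => ge_of_tendsto' (hx i) fun k => (hxk k i).le
    set M : ℝ := (∑ i, p.2.2 i) + 1 with hM_def
    have hMpos : 0 < M := by
      have := Finset.sum_nonneg (fun i (_ : i ∈ (univ : Finset (Fin n))) => hx0 i)
      simp only [hM_def]; linarith
    have hMlt : ∀ i, p.2.2 i < M := fun i =>
      lt_of_le_of_lt (Finset.single_le_sum (fun j _ => hx0 j) (mem_univ i)) (lt_add_one _)
    have hMev : ∀ᶠ k in atTop, ∀ i, (q k).2.2 i ≤ M := by
      rw [Filter.eventually_all]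
      intro i
      exact (Filter.Tendsto.eventually_lt_const (hMlt i) (hx i)).mono fun k hk => hk.le
    -- pointwise lower bound for each term, given coordinates bounded by M
    have hptwise : ∀ k, (∀ i, (q k).2.2 i ≤ M) → ∀ i : Fin n,
        (q k).2.1 * Real.log (q k).2.1 - (q k).2.1 * Real.log M
          ≤ -((q k).2.1 * Real.log ((q k).2.2 i / (q k).2.1)) := by
      intro k hk i
      rw [Real.log_div (hxk k i).ne' (hvk k).ne', mul_sub]
      have h1 : Real.log ((q k).2.2 i) ≤ Real.log M := Real.log_le_log (hxk k i) (hk i)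
      have h2 : (q k).2.1 * Real.log ((q k).2.2 i) ≤ (q k).2.1 * Real.log M :=
        mul_le_mul_of_nonneg_left h1 (hvk k).le
      linarith
    have hsumlow : ∀ᶠ k in atTop,
        (n : ℝ) * ((q k).2.1 * Real.log (q k).2.1 - (q k).2.1 * Real.log M) ≤ (q k).1 := by
      filter_upwards [hMev] with k hk
      calc (n : ℝ) * ((q k).2.1 * Real.log (q k).2.1 - (q k).2.1 * Real.log M)
          = ∑ _i : Fin n, ((q k).2.1 * Real.log (q k).2.1 - (q k).2.1 * Real.log M) := by
            simp [Finset.sum_const, nsmul_eq_mul, mul_sub]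
        _ ≤ ∑ i : Fin n, -((q k).2.1 * Real.log ((q k).2.2 i / (q k).2.1)) :=
            Finset.sum_le_sum fun i _ => hptwise k hk i
        _ = -∑ i, (q k).2.1 * Real.log ((q k).2.2 i / (q k).2.1) := by
            rw [Finset.sum_neg_distrib]
        _ ≤ (q k).1 := hfk k
    rcases hv0.lt_or_eq with hvpos | hveq
    · -- case 0 < v
      left
      have hxpos : ∀ i, 0 < p.2.2 i := by
        intro i
        rcases (hx0 i).lt_or_eq with h | h
        · exact h
        · exfalso
          have hdiv : Tendsto (fun k => (q k).2.2 i / (q k).2.1) atTop (𝓝[>] (0:ℝ)) := by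
            refine tendsto_nhdsWithin_of_tendsto_nhds_of_eventually_within _ ?_
              (Eventually.of_forall fun k => Set.mem_Ioi.mpr (div_pos (hxk k i) (hvk k)))
            have h0 := (hx i).div hv hvpos.ne'
            rw [← h] at h0
            rw [zero_div] at h0; exact h0
          have hterm : Tendsto
              (fun k => Real.log ((q k).2.2 i / (q k).2.1) * (-(q k).2.1)) atTop atTop :=
            Filter.Tendsto.atBot_mul_neg (neg_lt_zero.mpr hvpos)
              (Real.tendsto_log_nhdsGT_zero.comp hdiv) hv.neg
          have hc : Tendsto
              (fun k => (q k).2.1 * Real.log (q k).2.1 - (q k).2.1 * Real.log M) atTop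
              (𝓝 (p.2.1 * Real.log p.2.1 - p.2.1 * Real.log M)) :=
            (hv.mul ((Real.continuousAt_log hvpos.ne').tendsto.comp hv)).sub (hv.mul_const _)
          set m : ℕ := ((univ : Finset (Fin n)).erase i).card with hm_def
          have hsum_top : Tendsto (fun k =>
              Real.log ((q k).2.2 i / (q k).2.1) * (-(q k).2.1)
                + (m : ℝ) * ((q k).2.1 * Real.log (q k).2.1 - (q k).2.1 * Real.log M))
              atTop atTop :=
            hterm.atTop_add (hc.const_mul _)
          have hle : ∀ᶠ k in atTop,
              Real.log ((q k).2.2 i / (q k).2.1) * (-(q k).2.1)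
                + (m : ℝ) * ((q k).2.1 * Real.log (q k).2.1 - (q k).2.1 * Real.log M)
              ≤ (q k).1 := by
            filter_upwards [hMev] with k hk
            have h2 : (m : ℝ) * ((q k).2.1 * Real.log (q k).2.1 - (q k).2.1 * Real.log M)
                ≤ ∑ j ∈ (univ : Finset (Fin n)).erase i,
                    -((q k).2.1 * Real.log ((q k).2.2 j / (q k).2.1)) := by
              rw [← nsmul_eq_mul, ← Finset.sum_const]
              exact Finset.sum_le_sum fun j _ => hptwise k hk j
            have h3 : Real.log ((q k).2.2 i / (q k).2.1) * (-(q k).2.1)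
                = -((q k).2.1 * Real.log ((q k).2.2 i / (q k).2.1)) := by ring
            have h4 : -((q k).2.1 * Real.log ((q k).2.2 i / (q k).2.1))
                + ∑ j ∈ (univ : Finset (Fin n)).erase i,
                    -((q k).2.1 * Real.log ((q k).2.2 j / (q k).2.1))
                = -∑ j, (q k).2.1 * Real.log ((q k).2.2 j / (q k).2.1) := by
              rw [Finset.sum_neg_distrib, ← neg_add]
              exact congrArg Neg.neg (Finset.add_sum_erase univ
                (fun j => (q k).2.1 * Real.log ((q k).2.2 j / (q k).2.1)) (mem_univ i))
            calc Real.log ((q k).2.2 i / (q k).2.1) * (-(q k).2.1)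
                  + (m : ℝ) * ((q k).2.1 * Real.log (q k).2.1 - (q k).2.1 * Real.log M)
                ≤ -((q k).2.1 * Real.log ((q k).2.2 i / (q k).2.1))
                  + ∑ j ∈ (univ : Finset (Fin n)).erase i,
                      -((q k).2.1 * Real.log ((q k).2.2 j / (q k).2.1)) := by
                  rw [h3]; exact add_le_add le_rfl h2
              _ = -∑ j, (q k).2.1 * Real.log ((q k).2.2 j / (q k).2.1) := h4
              _ ≤ (q k).1 := hfk k
          have h5 := hsum_top.eventually_gt_atTop (p.1 + 1)
          have h6 := Filter.Tendsto.eventually_lt_const (lt_add_one p.1) ht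
          obtain ⟨k, hk1, hk2, hk3⟩ := (h5.and (h6.and hle)).exists
          linarith
      have hf : Tendsto (fun k => -∑ i, (q k).2.1 * Real.log ((q k).2.2 i / (q k).2.1)) atTop
          (𝓝 (-∑ i, p.2.1 * Real.log (p.2.2 i / p.2.1))) := by
        refine Filter.Tendsto.neg (tendsto_finset_sum _ fun i _ => ?_)
        exact hv.mul ((Real.continuousAt_log (div_pos (hxpos i) hvpos).ne').tendsto.comp
          ((hx i).div hv hvpos.ne'))
      exact ⟨hvpos, hxpos, le_of_tendsto_of_tendsto hf ht (Eventually.of_forall hfk)⟩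
    · -- case v = 0
      right
      refine ⟨?_, hveq.symm, hx0⟩
      have hv0' : Tendsto (fun k => (q k).2.1) atTop (𝓝 0) := by rw [hveq]; exact hv
      have hv' : Tendsto (fun k => (q k).2.1) atTop (𝓝[>] (0:ℝ)) :=
        tendsto_nhdsWithin_of_tendsto_nhds_of_eventually_within _ hv0'
          (Eventually.of_forall fun k => Set.mem_Ioi.mpr (hvk k))
      have hgl : Tendsto (fun k =>
          (n : ℝ) * ((q k).2.1 * Real.log (q k).2.1 - (q k).2.1 * Real.log M)) atTop (𝓝 0) := by
        have h1 : Tendsto (fun k => (q k).2.1 * Real.log (q k).2.1) atTop (𝓝 0) :=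
          stmt4_xlogx.comp hv'
        have h2 : Tendsto (fun k => (q k).2.1 * Real.log M) atTop (𝓝 0) := by
          simpa using hv0'.mul_const (Real.log M)
        simpa using (h1.sub h2).const_mul (n : ℝ)
      exact le_of_tendsto_of_tendsto hgl ht hsumlow
  · -- union ⊆ closure
    rintro p (hp | ⟨hpt, hpv, hpx⟩)
    · exact subset_closure hp
    · set u : ℕ → ℝ := fun k => 1 / ((k : ℝ) + 1) with hu_def
      have hupos : ∀ k, 0 < u k := fun k => by positivity
      have hu : Tendsto u atTop (𝓝 0) := tendsto_one_div_add_atTop_nhds_zero_nat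
      have hu' : Tendsto u atTop (𝓝[>] (0:ℝ)) :=
        tendsto_nhdsWithin_of_tendsto_nhds_of_eventually_within _ hu
          (Eventually.of_forall fun k => Set.mem_Ioi.mpr (hupos k))
      have hterm : ∀ i, Tendsto (fun k => u k * Real.log (p.2.2 i + u k)) atTop (𝓝 0) := by
        intro i
        rcases (hpx i).lt_or_eq with h | h
        · have hadd : Tendsto (fun k => p.2.2 i + u k) atTop (𝓝 (p.2.2 i)) := by
            simpa using tendsto_const_nhds.add hu
          have hlog : Tendsto (fun k => Real.log (p.2.2 i + u k)) atTop
              (𝓝 (Real.log (p.2.2 i))) := (Real.continuousAt_log h.ne').tendsto.comp hadd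
          simpa using hu.mul hlog
        · have h0 := stmt4_xlogx.comp hu'
          rw [← h]
          simpa [Function.comp_def] using h0
      have hgl : Tendsto (fun k => -∑ i, u k * Real.log ((p.2.2 i + u k) / u k)) atTop
          (𝓝 0) := by
        have heq : ∀ k, -∑ i, u k * Real.log ((p.2.2 i + u k) / u k)
            = ∑ i : Fin n, (u k * Real.log (u k) - u k * Real.log (p.2.2 i + u k)) := by
          intro k
          rw [← Finset.sum_neg_distrib]
          refine Finset.sum_congr rfl fun i _ => ?_
          rw [Real.log_div (add_pos_of_nonneg_of_pos (hpx i) (hupos k)).ne' (hupos k).ne',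
            mul_sub]
          ring
        rw [tendsto_congr heq]
        have h0 : Tendsto (fun k =>
            ∑ i : Fin n, (u k * Real.log (u k) - u k * Real.log (p.2.2 i + u k))) atTop
            (𝓝 (∑ _i : Fin n, (0:ℝ))) :=
          tendsto_finset_sum _ fun i _ => by simpa using (stmt4_xlogx.comp hu').sub (hterm i)
        simpa using h0
      have hslim : Tendsto
          (fun k => max 0 (-∑ i, u k * Real.log ((p.2.2 i + u k) / u k))) atTop (𝓝 0) := by
        simpa using Filter.Tendsto.max (tendsto_const_nhds (x := (0:ℝ))) hgl
      refine mem_closure_of_tendsto (f := fun k : ℕ =>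
        ((p.1 + max 0 (-∑ i, u k * Real.log ((p.2.2 i + u k) / u k)), u k,
          fun i => p.2.2 i + u k) : ℝ × ℝ × (Fin n → ℝ))) (b := atTop) ?_ ?_
      · have h1 : Tendsto (fun k =>
            p.1 + max 0 (-∑ i, u k * Real.log ((p.2.2 i + u k) / u k))) atTop (𝓝 p.1) := by
          simpa using tendsto_const_nhds.add hslim
        have h2 : Tendsto u atTop (𝓝 p.2.1) := by rw [hpv]; exact hu
        have h3 : Tendsto (fun k => fun i => p.2.2 i + u k) atTop (𝓝 p.2.2) := by
          rw [tendsto_pi_nhds]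
          intro i
          simpa using tendsto_const_nhds.add hu
        exact h1.prodMk_nhds (h2.prodMk_nhds h3)
      · refine Eventually.of_forall fun k => ⟨hupos k, fun i =>
          add_pos_of_nonneg_of_pos (hpx i) (hupos k), ?_⟩
        exact (le_max_right 0 _).trans (le_add_of_nonneg_left hpt)
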